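/- The Shapley-based contribution function ctrb^s violates the local faithfulness principle with respect to the DFQuAD semantics: there exist an acyclic QBAG G and arguments a, x ∈ A with ctrb^s_{G,a}(x) < 0 such that for every δ > 0 there is ε ∈ [τ(x) − δ, τ(x) + δ] ∩ [0,1] violating the defining condition of local faithfulness. (A witness is the QBAG with A = {a, b, c, d, e}, τ(a) = τ(e) = 0.5, τ(b) = τ(c) = τ(d) = 0, support (b,a), attacks (c,a), (d,a), and supports (e,b), (e,c), (e,d), where ctrb^s_{G,a}(e) = −1/12 < 0 but increasing τ(e) above 0.5 increases σ_G(a).) -/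

import Mathlib

open Finset

/-- A quantitative bipolar argumentation graph (QBAG): a finite set of arguments,
an initial strength function, and attack and support relations. -/
structure QBAG where
  args : Finset ℕ
  tau : ℕ → ℝ
  att : Finset (ℕ × ℕ)
  supp : Finset (ℕ × ℕ)

namespace QBAG

/-- The edge relation of the underlying directed graph (attack or support). -/
def edge (G : QBAG) (x y : ℕ) : Prop := (x, y) ∈ G.att ∨ (x, y) ∈ G.supp

/-- Well-formedness: edges live on the arguments, attack and support are disjoint,
and initial strengths lie in [0,1]. -/
def WF (G : QBAG) : Prop :=
  (∀ p ∈ G.att, p.1 ∈ G.args ∧ p.2 ∈ G.args) ∧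
  (∀ p ∈ G.supp, p.1 ∈ G.args ∧ p.2 ∈ G.args) ∧
  Disjoint G.att G.supp ∧
  (∀ a ∈ G.args, G.tau a ∈ Set.Icc (0 : ℝ) 1)

/-- Acyclicity of the directed graph (A, Att ∪ Supp). -/
def Acyclic (G : QBAG) : Prop := ∀ x, ¬ Relation.TransGen G.edge x x

/-- Direct attackers of an argument. -/
def attackers (G : QBAG) (a : ℕ) : Finset ℕ :=
  (G.att.filter (fun p => p.2 = a)).image Prod.fst

/-- Direct supporters of an argument. -/
def supporters (G : QBAG) (a : ℕ) : Finset ℕ :=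
  (G.supp.filter (fun p => p.2 = a)).image Prod.fst

/-- Restriction G↓S of a QBAG to a subset S of the arguments. -/
def restrict (G : QBAG) (S : Finset ℕ) : QBAG where
  args := G.args ∩ S
  tau := G.tau
  att := G.att.filter (fun p => p.1 ∈ S ∧ p.2 ∈ S)
  supp := G.supp.filter (fun p => p.1 ∈ S ∧ p.2 ∈ S)

/-- G⁻: the QBAG G with every attack and support edge pointing into x removed. -/
def dropInto (G : QBAG) (x : ℕ) : QBAG where
  args := G.args
  tau := G.tau
  att := G.att.filter (fun p => p.2 ≠ x)
  supp := G.supp.filter (fun p => p.2 ≠ x)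

/-- G[x←ε]: the QBAG G with the initial strength of x replaced by ε. -/
def setTau (G : QBAG) (x : ℕ) (ε : ℝ) : QBAG where
  args := G.args
  tau := Function.update G.tau x ε
  att := G.att
  supp := G.supp

end QBAG

noncomputable section

/-- Sum aggregation. -/
def sumAgg (G : QBAG) (s : ℕ → ℝ) (a : ℕ) : ℝ :=
  (∑ y ∈ G.supporters a, s y) - (∑ y ∈ G.attackers a, s y)

/-- Product aggregation. -/
def prodAgg (G : QBAG) (s : ℕ → ℝ) (a : ℕ) : ℝ :=
  (∏ y ∈ G.attackers a, (1 - s y)) - (∏ y ∈ G.supporters a, (1 - s y))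

/-- Top aggregation. -/
def topAgg (G : QBAG) (s : ℕ → ℝ) (a : ℕ) : ℝ :=
  (G.supporters a).fold max 0 s - (G.attackers a).fold max 0 s

/-- h for the 2-Max(1) influence function. -/
def h2 (x : ℝ) : ℝ := max 0 x ^ 2 / (1 + max 0 x ^ 2)

/-- h for the 1-Max(1) influence function. -/
def h1 (x : ℝ) : ℝ := max 0 x / (1 + max 0 x)

/-- 2-Max(1) influence function (used by QE). -/
def iotaQE (w s : ℝ) : ℝ := w - w * h2 (-s) + (1 - w) * h2 s

/-- Linear(1) influence function (used by DFQuAD). -/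
def iotaLin (w s : ℝ) : ℝ := w - w * max 0 (-s) + (1 - w) * max 0 s

/-- 1-Max(1) influence function (used by SD-DFQuAD). -/
def iotaSD (w s : ℝ) : ℝ := w - w * h1 (-s) + (1 - w) * h1 s

/-- Euler-based influence function (used by EB and EBT). -/
def iotaEB (w s : ℝ) : ℝ := 1 - (1 - w ^ 2) / (1 + w * Real.exp s)

/-- σ is a modular semantics with aggregation `agg` and influence `iota`:
on every well-formed acyclic QBAG the final strengths satisfy the defining equations. -/
def IsSemantics (agg : QBAG → (ℕ → ℝ) → ℕ → ℝ) (iota : ℝ → ℝ → ℝ)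
    (σ : QBAG → ℕ → ℝ) : Prop :=
  ∀ G : QBAG, G.WF → G.Acyclic → ∀ a ∈ G.args, σ G a = iota (G.tau a) (agg G (σ G) a)

/-- QE semantics. -/
def IsQE (σ : QBAG → ℕ → ℝ) : Prop := IsSemantics sumAgg iotaQE σ

/-- DFQuAD semantics. -/
def IsDF (σ : QBAG → ℕ → ℝ) : Prop := IsSemantics prodAgg iotaLin σ

/-- SD-DFQuAD semantics. -/
def IsSD (σ : QBAG → ℕ → ℝ) : Prop := IsSemantics prodAgg iotaSD σ

/-- EB semantics. -/
def IsEB (σ : QBAG → ℕ → ℝ) : Prop := IsSemantics sumAgg iotaEB σ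

/-- EBT semantics. -/
def IsEBT (σ : QBAG → ℕ → ℝ) : Prop := IsSemantics topAgg iotaEB σ

/-- A gradual semantics assigns final strengths in [0,1] on acyclic QBAGs. -/
def IsGradualSemantics (σ : QBAG → ℕ → ℝ) : Prop :=
  ∀ G : QBAG, G.WF → G.Acyclic → ∀ a ∈ G.args, σ G a ∈ Set.Icc (0 : ℝ) 1

/-- Removal-based contribution: ctrb^r_{G,a}(x) = σ_G(a) − σ_{G↓(A∖{x})}(a). -/
def ctrbR (σ : QBAG → ℕ → ℝ) (G : QBAG) (a x : ℕ) : ℝ :=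
  σ G a - σ (G.restrict (G.args.erase x)) a

/-- Intrinsic-removal contribution: ctrb^{ri}_{G,a}(x) = σ_{G⁻}(a) − σ_{G↓(A∖{x})}(a). -/
def ctrbRI (σ : QBAG → ℕ → ℝ) (G : QBAG) (a x : ℕ) : ℝ :=
  σ (G.dropInto x) a - σ (G.restrict (G.args.erase x)) a

/-- Shapley-based contribution. -/
def ctrbS (σ : QBAG → ℕ → ℝ) (G : QBAG) (a x : ℕ) : ℝ :=
  ∑ X ∈ ((G.args.erase a).erase x).powerset,
    ((X.card.factorial : ℝ) * ((G.args.erase a).card - X.card - 1).factorial /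
      (G.args.erase a).card.factorial) *
    (σ (G.restrict (G.args \ X)) a - σ (G.restrict (G.args \ insert x X)) a)

/-- Gradient-based contribution: the derivative at ε = τ(x) (within [0,1]) of
the map ε ↦ σ_{G[x←ε]}(a). -/
def ctrbG (σ : QBAG → ℕ → ℝ) (G : QBAG) (a x : ℕ) : ℝ :=
  derivWithin (fun ε => σ (G.setTau x ε) a) (Set.Icc (0 : ℝ) 1) (G.tau x)

/-- The contribution existence principle. -/
def ContributionExistence (ctrb : QBAG → ℕ → ℕ → ℝ) (σ : QBAG → ℕ → ℝ) : Prop :=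
  ∀ G : QBAG, G.WF → G.Acyclic → ∀ a ∈ G.args,
    σ G a ≠ G.tau a → ∃ x ∈ G.args, x ≠ a ∧ ctrb G a x ≠ 0

/-- The quantitative contribution existence principle. -/
def QuantContributionExistence (ctrb : QBAG → ℕ → ℕ → ℝ) (σ : QBAG → ℕ → ℝ) : Prop :=
  ∀ G : QBAG, G.WF → G.Acyclic → ∀ a ∈ G.args,
    ∑ x ∈ G.args.erase a, ctrb G a x = σ G a - G.tau a

/-- The strong faithfulness principle. -/
def StrongFaithfulness (ctrb : QBAG → ℕ → ℕ → ℝ) (σ : QBAG → ℕ → ℝ) : Prop :=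
  ∀ G : QBAG, G.WF → G.Acyclic → ∀ a ∈ G.args, ∀ x ∈ G.args,
    ∀ ε ∈ Set.Icc (0 : ℝ) 1,
      (ctrb G a x < 0 →
        (ε < G.tau x → σ G a < σ (G.setTau x ε) a) ∧
        (ε > G.tau x → σ G a > σ (G.setTau x ε) a)) ∧
      (ctrb G a x = 0 → σ G a = σ (G.setTau x ε) a) ∧
      (ctrb G a x > 0 →
        (ε < G.tau x → σ G a > σ (G.setTau x ε) a) ∧
        (ε > G.tau x → σ G a < σ (G.setTau x ε) a))

/-- The local faithfulness principle. -/
def LocalFaithfulness (ctrb : QBAG → ℕ → ℕ → ℝ) (σ : QBAG → ℕ → ℝ) : Prop :=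
  ∀ G : QBAG, G.WF → G.Acyclic → ∀ a ∈ G.args, ∀ x ∈ G.args,
    ∃ δ > 0, ∀ ε ∈ Set.Icc (G.tau x - δ) (G.tau x + δ) ∩ Set.Icc (0 : ℝ) 1,
      (ctrb G a x < 0 →
        (ε < G.tau x → σ G a < σ (G.setTau x ε) a) ∧
        (ε > G.tau x → σ G a > σ (G.setTau x ε) a)) ∧
      (ctrb G a x > 0 →
        (ε < G.tau x → σ G a > σ (G.setTau x ε) a) ∧
        (ε > G.tau x → σ G a < σ (G.setTau x ε) a))

/-- The quantitative local faithfulness principle: the map ε ↦ σ_{G[x←ε]}(a) is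
differentiable (within [0,1]) at τ(x) with derivative ctrb_{G,a}(x); equivalently
σ_{G[x←τ(x)+ε]}(a) = σ_G(a) + ε·ctrb_{G,a}(x) + e(ε) with e(ε)/ε → 0. -/
def QuantLocalFaithfulness (ctrb : QBAG → ℕ → ℕ → ℝ) (σ : QBAG → ℕ → ℝ) : Prop :=
  ∀ G : QBAG, G.WF → G.Acyclic → ∀ a ∈ G.args, ∀ x ∈ G.args,
    HasDerivWithinAt (fun ε => σ (G.setTau x ε) a) (ctrb G a x)
      (Set.Icc (0 : ℝ) 1) (G.tau x)

/-- The counterfactuality principle. -/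
def Counterfactuality (ctrb : QBAG → ℕ → ℕ → ℝ) (σ : QBAG → ℕ → ℝ) : Prop :=
  ∀ G : QBAG, G.WF → G.Acyclic → ∀ a ∈ G.args, ∀ x ∈ G.args,
    (ctrb G a x < 0 → σ G a < σ (G.restrict (G.args.erase x)) a) ∧
    (ctrb G a x = 0 → σ G a = σ (G.restrict (G.args.erase x)) a) ∧
    (ctrb G a x > 0 → σ G a > σ (G.restrict (G.args.erase x)) a)

/-- The quantitative counterfactuality principle. -/
def QuantCounterfactuality (ctrb : QBAG → ℕ → ℕ → ℝ) (σ : QBAG → ℕ → ℝ) : Prop :=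
  ∀ G : QBAG, G.WF → G.Acyclic → ∀ a ∈ G.args, ∀ x ∈ G.args,
    ctrb G a x = σ G a - σ (G.restrict (G.args.erase x)) a

end

section Aux

lemma acyclic_of_rank (G : QBAG) (f : ℕ → ℕ) (hf : ∀ x y, G.edge x y → f x < f y) :
    G.Acyclic := by
  intro x hx
  have key : ∀ y, Relation.TransGen G.edge x y → f x < f y := by
    intro y h
    induction h with
    | single h => exact hf _ _ h
    | tail _ h ih => exact ih.trans (hf _ _ h)
  exact absurd (key x hx) (lt_irrefl _)

lemma acyclic_mono {G H : QBAG} (h : ∀ x y, H.edge x y → G.edge x y)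
    (hG : G.Acyclic) : H.Acyclic :=
  fun x hx => hG x (Relation.TransGen.mono h x x hx)

lemma edge_restrict {G : QBAG} {S : Finset ℕ} {x y : ℕ}
    (h : (G.restrict S).edge x y) : G.edge x y := by
  rcases h with h | h
  · exact Or.inl (Finset.mem_filter.1 h).1
  · exact Or.inr (Finset.mem_filter.1 h).1

lemma wf_restrict {G : QBAG} (h : G.WF) (S : Finset ℕ) : (G.restrict S).WF := by
  obtain ⟨ha, hs, hd, ht⟩ := h
  refine ⟨?_, ?_, ?_, ?_⟩
  · intro p hp
    simp only [QBAG.restrict, Finset.mem_filter, Finset.mem_inter] at hp ⊢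
    exact ⟨⟨(ha p hp.1).1, hp.2.1⟩, ⟨(ha p hp.1).2, hp.2.2⟩⟩
  · intro p hp
    simp only [QBAG.restrict, Finset.mem_filter, Finset.mem_inter] at hp ⊢
    exact ⟨⟨(hs p hp.1).1, hp.2.1⟩, ⟨(hs p hp.1).2, hp.2.2⟩⟩
  · exact Finset.disjoint_filter_filter hd
  · intro a hamem
    simp only [QBAG.restrict, Finset.mem_inter] at hamem
    exact ht a hamem.1

lemma wf_setTau {G : QBAG} (h : G.WF) {x : ℕ} {ε : ℝ} (hε : ε ∈ Set.Icc (0:ℝ) 1) :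
    (G.setTau x ε).WF := by
  obtain ⟨ha, hs, hd, ht⟩ := h
  refine ⟨ha, hs, hd, ?_⟩
  intro a hamem
  simp only [QBAG.setTau, Function.update_apply]
  split
  · exact hε
  · exact ht a hamem

lemma sigma_node {σ : QBAG → ℕ → ℝ} (hσ : IsDF σ) {H : QBAG} (hWF : H.WF)
    (hAc : H.Acyclic) {a : ℕ} (ha : a ∈ H.args) {A S : Finset ℕ}
    (hA : H.attackers a = A) (hS : H.supporters a = S) :
    σ H a = iotaLin (H.tau a) ((∏ y ∈ A, (1 - σ H y)) - ∏ y ∈ S, (1 - σ H y)) := by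
  rw [hσ H hWF hAc a ha, prodAgg, hA, hS]

end Aux

section Witness
noncomputable def Gw : QBAG where
  args := {0,1,2,3,4}
  tau := fun n => if n = 1 ∨ n = 2 ∨ n = 3 then 0 else 1/2
  att := {(2,0),(3,0)}
  supp := {(1,0),(4,1),(4,2),(4,3)}

lemma Gw_acyclic : Gw.Acyclic := by
  apply acyclic_of_rank Gw (fun n => if n = 4 then 0 else if n = 0 then 2 else 1)
  intro x y h
  have hm : (x,y) ∈ ({(2,0),(3,0),(1,0),(4,1),(4,2),(4,3)} : Finset (ℕ×ℕ)) := by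
    rcases h with h | h
    · exact (show Gw.att ⊆ ({(2,0),(3,0),(1,0),(4,1),(4,2),(4,3)} : Finset (ℕ×ℕ)) by decide) h
    · exact (show Gw.supp ⊆ ({(2,0),(3,0),(1,0),(4,1),(4,2),(4,3)} : Finset (ℕ×ℕ)) by decide) h
  simp only [Finset.mem_insert, Finset.mem_singleton, Prod.mk.injEq] at hm
  rcases hm with ⟨rfl,rfl⟩|⟨rfl,rfl⟩|⟨rfl,rfl⟩|⟨rfl,rfl⟩|⟨rfl,rfl⟩|⟨rfl,rfl⟩ <;> norm_num

lemma Gw_wf : Gw.WF := by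
  refine ⟨?_, ?_, ?_, ?_⟩
  · decide
  · decide
  · decide
  · intro a ha
    fin_cases ha <;> norm_num [Gw]

end Witness

lemma sigA_0 (σ : QBAG → ℕ → ℝ) (hσ : IsDF σ) : σ (Gw.restrict (Gw.args \ (∅ : Finset ℕ))) 0 = 3/8 := by
  have hWF : (Gw.restrict (Gw.args \ (∅ : Finset ℕ))).WF := wf_restrict Gw_wf _
  have hAc : (Gw.restrict (Gw.args \ (∅ : Finset ℕ))).Acyclic := acyclic_mono (fun _ _ h => edge_restrict h) Gw_acyclic
  have h4 : σ (Gw.restrict (Gw.args \ (∅ : Finset ℕ))) 4 = 1/2 := by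
    rw [sigma_node hσ hWF hAc (by decide) (by decide : (Gw.restrict (Gw.args \ (∅ : Finset ℕ))).attackers 4 = ∅)
      (by decide : (Gw.restrict (Gw.args \ (∅ : Finset ℕ))).supporters 4 = ∅)]
    norm_num [iotaLin, QBAG.restrict, Gw]
  have h1 : σ (Gw.restrict (Gw.args \ (∅ : Finset ℕ))) 1 = 1/2 := by
    rw [sigma_node hσ hWF hAc (by decide) (by decide : (Gw.restrict (Gw.args \ (∅ : Finset ℕ))).attackers 1 = ∅)
      (by decide : (Gw.restrict (Gw.args \ (∅ : Finset ℕ))).supporters 1 = ({4} : Finset ℕ)), Finset.prod_singleton, h4]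
    norm_num [iotaLin, QBAG.restrict, Gw, max_def]
  have h2 : σ (Gw.restrict (Gw.args \ (∅ : Finset ℕ))) 2 = 1/2 := by
    rw [sigma_node hσ hWF hAc (by decide) (by decide : (Gw.restrict (Gw.args \ (∅ : Finset ℕ))).attackers 2 = ∅)
      (by decide : (Gw.restrict (Gw.args \ (∅ : Finset ℕ))).supporters 2 = ({4} : Finset ℕ)), Finset.prod_singleton, h4]
    norm_num [iotaLin, QBAG.restrict, Gw, max_def]
  have h3 : σ (Gw.restrict (Gw.args \ (∅ : Finset ℕ))) 3 = 1/2 := by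
    rw [sigma_node hσ hWF hAc (by decide) (by decide : (Gw.restrict (Gw.args \ (∅ : Finset ℕ))).attackers 3 = ∅)
      (by decide : (Gw.restrict (Gw.args \ (∅ : Finset ℕ))).supporters 3 = ({4} : Finset ℕ)), Finset.prod_singleton, h4]
    norm_num [iotaLin, QBAG.restrict, Gw, max_def]
  rw [sigma_node hσ hWF hAc (by decide) (by decide : (Gw.restrict (Gw.args \ (∅ : Finset ℕ))).attackers 0 = ({2,3} : Finset ℕ))
    (by decide : (Gw.restrict (Gw.args \ (∅ : Finset ℕ))).supporters 0 = ({1} : Finset ℕ))]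
  simp only [Finset.prod_singleton, Finset.prod_empty, Finset.prod_pair (by norm_num : (2:ℕ) ≠ 3), h1, h2, h3]
  norm_num [iotaLin, QBAG.restrict, Gw, max_def]

lemma sigB_0 (σ : QBAG → ℕ → ℝ) (hσ : IsDF σ) : σ (Gw.restrict (Gw.args \ insert 4 (∅ : Finset ℕ))) 0 = 1/2 := by
  have hWF : (Gw.restrict (Gw.args \ insert 4 (∅ : Finset ℕ))).WF := wf_restrict Gw_wf _
  have hAc : (Gw.restrict (Gw.args \ insert 4 (∅ : Finset ℕ))).Acyclic := acyclic_mono (fun _ _ h => edge_restrict h) Gw_acyclic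
  have h1 : σ (Gw.restrict (Gw.args \ insert 4 (∅ : Finset ℕ))) 1 = 0 := by
    rw [sigma_node hσ hWF hAc (by decide) (by decide : (Gw.restrict (Gw.args \ insert 4 (∅ : Finset ℕ))).attackers 1 = ∅)
      (by decide : (Gw.restrict (Gw.args \ insert 4 (∅ : Finset ℕ))).supporters 1 = (∅ : Finset ℕ))]
    norm_num [iotaLin, QBAG.restrict, Gw, max_def]
  have h2 : σ (Gw.restrict (Gw.args \ insert 4 (∅ : Finset ℕ))) 2 = 0 := by
    rw [sigma_node hσ hWF hAc (by decide) (by decide : (Gw.restrict (Gw.args \ insert 4 (∅ : Finset ℕ))).attackers 2 = ∅)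
      (by decide : (Gw.restrict (Gw.args \ insert 4 (∅ : Finset ℕ))).supporters 2 = (∅ : Finset ℕ))]
    norm_num [iotaLin, QBAG.restrict, Gw, max_def]
  have h3 : σ (Gw.restrict (Gw.args \ insert 4 (∅ : Finset ℕ))) 3 = 0 := by
    rw [sigma_node hσ hWF hAc (by decide) (by decide : (Gw.restrict (Gw.args \ insert 4 (∅ : Finset ℕ))).attackers 3 = ∅)
      (by decide : (Gw.restrict (Gw.args \ insert 4 (∅ : Finset ℕ))).supporters 3 = (∅ : Finset ℕ))]
    norm_num [iotaLin, QBAG.restrict, Gw, max_def]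
  rw [sigma_node hσ hWF hAc (by decide) (by decide : (Gw.restrict (Gw.args \ insert 4 (∅ : Finset ℕ))).attackers 0 = ({2,3} : Finset ℕ))
    (by decide : (Gw.restrict (Gw.args \ insert 4 (∅ : Finset ℕ))).supporters 0 = ({1} : Finset ℕ))]
  simp only [Finset.prod_singleton, Finset.prod_empty, Finset.prod_pair (by norm_num : (2:ℕ) ≠ 3), h1, h2, h3]
  norm_num [iotaLin, QBAG.restrict, Gw, max_def]

lemma sigA_1 (σ : QBAG → ℕ → ℝ) (hσ : IsDF σ) : σ (Gw.restrict (Gw.args \ ({1} : Finset ℕ))) 0 = 1/8 := by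
  have hWF : (Gw.restrict (Gw.args \ ({1} : Finset ℕ))).WF := wf_restrict Gw_wf _
  have hAc : (Gw.restrict (Gw.args \ ({1} : Finset ℕ))).Acyclic := acyclic_mono (fun _ _ h => edge_restrict h) Gw_acyclic
  have h4 : σ (Gw.restrict (Gw.args \ ({1} : Finset ℕ))) 4 = 1/2 := by
    rw [sigma_node hσ hWF hAc (by decide) (by decide : (Gw.restrict (Gw.args \ ({1} : Finset ℕ))).attackers 4 = ∅)
      (by decide : (Gw.restrict (Gw.args \ ({1} : Finset ℕ))).supporters 4 = ∅)]
    norm_num [iotaLin, QBAG.restrict, Gw]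
  have h2 : σ (Gw.restrict (Gw.args \ ({1} : Finset ℕ))) 2 = 1/2 := by
    rw [sigma_node hσ hWF hAc (by decide) (by decide : (Gw.restrict (Gw.args \ ({1} : Finset ℕ))).attackers 2 = ∅)
      (by decide : (Gw.restrict (Gw.args \ ({1} : Finset ℕ))).supporters 2 = ({4} : Finset ℕ)), Finset.prod_singleton, h4]
    norm_num [iotaLin, QBAG.restrict, Gw, max_def]
  have h3 : σ (Gw.restrict (Gw.args \ ({1} : Finset ℕ))) 3 = 1/2 := by
    rw [sigma_node hσ hWF hAc (by decide) (by decide : (Gw.restrict (Gw.args \ ({1} : Finset ℕ))).attackers 3 = ∅)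
      (by decide : (Gw.restrict (Gw.args \ ({1} : Finset ℕ))).supporters 3 = ({4} : Finset ℕ)), Finset.prod_singleton, h4]
    norm_num [iotaLin, QBAG.restrict, Gw, max_def]
  rw [sigma_node hσ hWF hAc (by decide) (by decide : (Gw.restrict (Gw.args \ ({1} : Finset ℕ))).attackers 0 = ({2,3} : Finset ℕ))
    (by decide : (Gw.restrict (Gw.args \ ({1} : Finset ℕ))).supporters 0 = (∅ : Finset ℕ))]
  simp only [Finset.prod_singleton, Finset.prod_empty, Finset.prod_pair (by norm_num : (2:ℕ) ≠ 3), h2, h3]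
  norm_num [iotaLin, QBAG.restrict, Gw, max_def]

lemma sigB_1 (σ : QBAG → ℕ → ℝ) (hσ : IsDF σ) : σ (Gw.restrict (Gw.args \ insert 4 ({1} : Finset ℕ))) 0 = 1/2 := by
  have hWF : (Gw.restrict (Gw.args \ insert 4 ({1} : Finset ℕ))).WF := wf_restrict Gw_wf _
  have hAc : (Gw.restrict (Gw.args \ insert 4 ({1} : Finset ℕ))).Acyclic := acyclic_mono (fun _ _ h => edge_restrict h) Gw_acyclic
  have h2 : σ (Gw.restrict (Gw.args \ insert 4 ({1} : Finset ℕ))) 2 = 0 := by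
    rw [sigma_node hσ hWF hAc (by decide) (by decide : (Gw.restrict (Gw.args \ insert 4 ({1} : Finset ℕ))).attackers 2 = ∅)
      (by decide : (Gw.restrict (Gw.args \ insert 4 ({1} : Finset ℕ))).supporters 2 = (∅ : Finset ℕ))]
    norm_num [iotaLin, QBAG.restrict, Gw, max_def]
  have h3 : σ (Gw.restrict (Gw.args \ insert 4 ({1} : Finset ℕ))) 3 = 0 := by
    rw [sigma_node hσ hWF hAc (by decide) (by decide : (Gw.restrict (Gw.args \ insert 4 ({1} : Finset ℕ))).attackers 3 = ∅)
      (by decide : (Gw.restrict (Gw.args \ insert 4 ({1} : Finset ℕ))).supporters 3 = (∅ : Finset ℕ))]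
    norm_num [iotaLin, QBAG.restrict, Gw, max_def]
  rw [sigma_node hσ hWF hAc (by decide) (by decide : (Gw.restrict (Gw.args \ insert 4 ({1} : Finset ℕ))).attackers 0 = ({2,3} : Finset ℕ))
    (by decide : (Gw.restrict (Gw.args \ insert 4 ({1} : Finset ℕ))).supporters 0 = (∅ : Finset ℕ))]
  simp only [Finset.prod_singleton, Finset.prod_empty, Finset.prod_pair (by norm_num : (2:ℕ) ≠ 3), h2, h3]
  norm_num [iotaLin, QBAG.restrict, Gw, max_def]

lemma sigA_2 (σ : QBAG → ℕ → ℝ) (hσ : IsDF σ) : σ (Gw.restrict (Gw.args \ ({2} : Finset ℕ))) 0 = 1/2 := by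
  have hWF : (Gw.restrict (Gw.args \ ({2} : Finset ℕ))).WF := wf_restrict Gw_wf _
  have hAc : (Gw.restrict (Gw.args \ ({2} : Finset ℕ))).Acyclic := acyclic_mono (fun _ _ h => edge_restrict h) Gw_acyclic
  have h4 : σ (Gw.restrict (Gw.args \ ({2} : Finset ℕ))) 4 = 1/2 := by
    rw [sigma_node hσ hWF hAc (by decide) (by decide : (Gw.restrict (Gw.args \ ({2} : Finset ℕ))).attackers 4 = ∅)
      (by decide : (Gw.restrict (Gw.args \ ({2} : Finset ℕ))).supporters 4 = ∅)]
    norm_num [iotaLin, QBAG.restrict, Gw]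
  have h1 : σ (Gw.restrict (Gw.args \ ({2} : Finset ℕ))) 1 = 1/2 := by
    rw [sigma_node hσ hWF hAc (by decide) (by decide : (Gw.restrict (Gw.args \ ({2} : Finset ℕ))).attackers 1 = ∅)
      (by decide : (Gw.restrict (Gw.args \ ({2} : Finset ℕ))).supporters 1 = ({4} : Finset ℕ)), Finset.prod_singleton, h4]
    norm_num [iotaLin, QBAG.restrict, Gw, max_def]
  have h3 : σ (Gw.restrict (Gw.args \ ({2} : Finset ℕ))) 3 = 1/2 := by
    rw [sigma_node hσ hWF hAc (by decide) (by decide : (Gw.restrict (Gw.args \ ({2} : Finset ℕ))).attackers 3 = ∅)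
      (by decide : (Gw.restrict (Gw.args \ ({2} : Finset ℕ))).supporters 3 = ({4} : Finset ℕ)), Finset.prod_singleton, h4]
    norm_num [iotaLin, QBAG.restrict, Gw, max_def]
  rw [sigma_node hσ hWF hAc (by decide) (by decide : (Gw.restrict (Gw.args \ ({2} : Finset ℕ))).attackers 0 = ({3} : Finset ℕ))
    (by decide : (Gw.restrict (Gw.args \ ({2} : Finset ℕ))).supporters 0 = ({1} : Finset ℕ))]
  simp only [Finset.prod_singleton, Finset.prod_empty, h1, h3]
  norm_num [iotaLin, QBAG.restrict, Gw, max_def]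

lemma sigB_2 (σ : QBAG → ℕ → ℝ) (hσ : IsDF σ) : σ (Gw.restrict (Gw.args \ insert 4 ({2} : Finset ℕ))) 0 = 1/2 := by
  have hWF : (Gw.restrict (Gw.args \ insert 4 ({2} : Finset ℕ))).WF := wf_restrict Gw_wf _
  have hAc : (Gw.restrict (Gw.args \ insert 4 ({2} : Finset ℕ))).Acyclic := acyclic_mono (fun _ _ h => edge_restrict h) Gw_acyclic
  have h1 : σ (Gw.restrict (Gw.args \ insert 4 ({2} : Finset ℕ))) 1 = 0 := by
    rw [sigma_node hσ hWF hAc (by decide) (by decide : (Gw.restrict (Gw.args \ insert 4 ({2} : Finset ℕ))).attackers 1 = ∅)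
      (by decide : (Gw.restrict (Gw.args \ insert 4 ({2} : Finset ℕ))).supporters 1 = (∅ : Finset ℕ))]
    norm_num [iotaLin, QBAG.restrict, Gw, max_def]
  have h3 : σ (Gw.restrict (Gw.args \ insert 4 ({2} : Finset ℕ))) 3 = 0 := by
    rw [sigma_node hσ hWF hAc (by decide) (by decide : (Gw.restrict (Gw.args \ insert 4 ({2} : Finset ℕ))).attackers 3 = ∅)
      (by decide : (Gw.restrict (Gw.args \ insert 4 ({2} : Finset ℕ))).supporters 3 = (∅ : Finset ℕ))]
    norm_num [iotaLin, QBAG.restrict, Gw, max_def]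
  rw [sigma_node hσ hWF hAc (by decide) (by decide : (Gw.restrict (Gw.args \ insert 4 ({2} : Finset ℕ))).attackers 0 = ({3} : Finset ℕ))
    (by decide : (Gw.restrict (Gw.args \ insert 4 ({2} : Finset ℕ))).supporters 0 = ({1} : Finset ℕ))]
  simp only [Finset.prod_singleton, Finset.prod_empty, h1, h3]
  norm_num [iotaLin, QBAG.restrict, Gw, max_def]

lemma sigA_3 (σ : QBAG → ℕ → ℝ) (hσ : IsDF σ) : σ (Gw.restrict (Gw.args \ ({3} : Finset ℕ))) 0 = 1/2 := by
  have hWF : (Gw.restrict (Gw.args \ ({3} : Finset ℕ))).WF := wf_restrict Gw_wf _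
  have hAc : (Gw.restrict (Gw.args \ ({3} : Finset ℕ))).Acyclic := acyclic_mono (fun _ _ h => edge_restrict h) Gw_acyclic
  have h4 : σ (Gw.restrict (Gw.args \ ({3} : Finset ℕ))) 4 = 1/2 := by
    rw [sigma_node hσ hWF hAc (by decide) (by decide : (Gw.restrict (Gw.args \ ({3} : Finset ℕ))).attackers 4 = ∅)
      (by decide : (Gw.restrict (Gw.args \ ({3} : Finset ℕ))).supporters 4 = ∅)]
    norm_num [iotaLin, QBAG.restrict, Gw]
  have h1 : σ (Gw.restrict (Gw.args \ ({3} : Finset ℕ))) 1 = 1/2 := by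
    rw [sigma_node hσ hWF hAc (by decide) (by decide : (Gw.restrict (Gw.args \ ({3} : Finset ℕ))).attackers 1 = ∅)
      (by decide : (Gw.restrict (Gw.args \ ({3} : Finset ℕ))).supporters 1 = ({4} : Finset ℕ)), Finset.prod_singleton, h4]
    norm_num [iotaLin, QBAG.restrict, Gw, max_def]
  have h2 : σ (Gw.restrict (Gw.args \ ({3} : Finset ℕ))) 2 = 1/2 := by
    rw [sigma_node hσ hWF hAc (by decide) (by decide : (Gw.restrict (Gw.args \ ({3} : Finset ℕ))).attackers 2 = ∅)
      (by decide : (Gw.restrict (Gw.args \ ({3} : Finset ℕ))).supporters 2 = ({4} : Finset ℕ)), Finset.prod_singleton, h4]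
    norm_num [iotaLin, QBAG.restrict, Gw, max_def]
  rw [sigma_node hσ hWF hAc (by decide) (by decide : (Gw.restrict (Gw.args \ ({3} : Finset ℕ))).attackers 0 = ({2} : Finset ℕ))
    (by decide : (Gw.restrict (Gw.args \ ({3} : Finset ℕ))).supporters 0 = ({1} : Finset ℕ))]
  simp only [Finset.prod_singleton, Finset.prod_empty, h1, h2]
  norm_num [iotaLin, QBAG.restrict, Gw, max_def]

lemma sigB_3 (σ : QBAG → ℕ → ℝ) (hσ : IsDF σ) : σ (Gw.restrict (Gw.args \ insert 4 ({3} : Finset ℕ))) 0 = 1/2 := by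
  have hWF : (Gw.restrict (Gw.args \ insert 4 ({3} : Finset ℕ))).WF := wf_restrict Gw_wf _
  have hAc : (Gw.restrict (Gw.args \ insert 4 ({3} : Finset ℕ))).Acyclic := acyclic_mono (fun _ _ h => edge_restrict h) Gw_acyclic
  have h1 : σ (Gw.restrict (Gw.args \ insert 4 ({3} : Finset ℕ))) 1 = 0 := by
    rw [sigma_node hσ hWF hAc (by decide) (by decide : (Gw.restrict (Gw.args \ insert 4 ({3} : Finset ℕ))).attackers 1 = ∅)
      (by decide : (Gw.restrict (Gw.args \ insert 4 ({3} : Finset ℕ))).supporters 1 = (∅ : Finset ℕ))]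
    norm_num [iotaLin, QBAG.restrict, Gw, max_def]
  have h2 : σ (Gw.restrict (Gw.args \ insert 4 ({3} : Finset ℕ))) 2 = 0 := by
    rw [sigma_node hσ hWF hAc (by decide) (by decide : (Gw.restrict (Gw.args \ insert 4 ({3} : Finset ℕ))).attackers 2 = ∅)
      (by decide : (Gw.restrict (Gw.args \ insert 4 ({3} : Finset ℕ))).supporters 2 = (∅ : Finset ℕ))]
    norm_num [iotaLin, QBAG.restrict, Gw, max_def]
  rw [sigma_node hσ hWF hAc (by decide) (by decide : (Gw.restrict (Gw.args \ insert 4 ({3} : Finset ℕ))).attackers 0 = ({2} : Finset ℕ))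
    (by decide : (Gw.restrict (Gw.args \ insert 4 ({3} : Finset ℕ))).supporters 0 = ({1} : Finset ℕ))]
  simp only [Finset.prod_singleton, Finset.prod_empty, h1, h2]
  norm_num [iotaLin, QBAG.restrict, Gw, max_def]

lemma sigA_12 (σ : QBAG → ℕ → ℝ) (hσ : IsDF σ) : σ (Gw.restrict (Gw.args \ ({1,2} : Finset ℕ))) 0 = 1/4 := by
  have hWF : (Gw.restrict (Gw.args \ ({1,2} : Finset ℕ))).WF := wf_restrict Gw_wf _
  have hAc : (Gw.restrict (Gw.args \ ({1,2} : Finset ℕ))).Acyclic := acyclic_mono (fun _ _ h => edge_restrict h) Gw_acyclic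
  have h4 : σ (Gw.restrict (Gw.args \ ({1,2} : Finset ℕ))) 4 = 1/2 := by
    rw [sigma_node hσ hWF hAc (by decide) (by decide : (Gw.restrict (Gw.args \ ({1,2} : Finset ℕ))).attackers 4 = ∅)
      (by decide : (Gw.restrict (Gw.args \ ({1,2} : Finset ℕ))).supporters 4 = ∅)]
    norm_num [iotaLin, QBAG.restrict, Gw]
  have h3 : σ (Gw.restrict (Gw.args \ ({1,2} : Finset ℕ))) 3 = 1/2 := by
    rw [sigma_node hσ hWF hAc (by decide) (by decide : (Gw.restrict (Gw.args \ ({1,2} : Finset ℕ))).attackers 3 = ∅)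
      (by decide : (Gw.restrict (Gw.args \ ({1,2} : Finset ℕ))).supporters 3 = ({4} : Finset ℕ)), Finset.prod_singleton, h4]
    norm_num [iotaLin, QBAG.restrict, Gw, max_def]
  rw [sigma_node hσ hWF hAc (by decide) (by decide : (Gw.restrict (Gw.args \ ({1,2} : Finset ℕ))).attackers 0 = ({3} : Finset ℕ))
    (by decide : (Gw.restrict (Gw.args \ ({1,2} : Finset ℕ))).supporters 0 = (∅ : Finset ℕ))]
  simp only [Finset.prod_singleton, Finset.prod_empty, h3]
  norm_num [iotaLin, QBAG.restrict, Gw, max_def]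

lemma sigB_12 (σ : QBAG → ℕ → ℝ) (hσ : IsDF σ) : σ (Gw.restrict (Gw.args \ insert 4 ({1,2} : Finset ℕ))) 0 = 1/2 := by
  have hWF : (Gw.restrict (Gw.args \ insert 4 ({1,2} : Finset ℕ))).WF := wf_restrict Gw_wf _
  have hAc : (Gw.restrict (Gw.args \ insert 4 ({1,2} : Finset ℕ))).Acyclic := acyclic_mono (fun _ _ h => edge_restrict h) Gw_acyclic
  have h3 : σ (Gw.restrict (Gw.args \ insert 4 ({1,2} : Finset ℕ))) 3 = 0 := by
    rw [sigma_node hσ hWF hAc (by decide) (by decide : (Gw.restrict (Gw.args \ insert 4 ({1,2} : Finset ℕ))).attackers 3 = ∅)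
      (by decide : (Gw.restrict (Gw.args \ insert 4 ({1,2} : Finset ℕ))).supporters 3 = (∅ : Finset ℕ))]
    norm_num [iotaLin, QBAG.restrict, Gw, max_def]
  rw [sigma_node hσ hWF hAc (by decide) (by decide : (Gw.restrict (Gw.args \ insert 4 ({1,2} : Finset ℕ))).attackers 0 = ({3} : Finset ℕ))
    (by decide : (Gw.restrict (Gw.args \ insert 4 ({1,2} : Finset ℕ))).supporters 0 = (∅ : Finset ℕ))]
  simp only [Finset.prod_singleton, Finset.prod_empty, h3]
  norm_num [iotaLin, QBAG.restrict, Gw, max_def]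

lemma sigA_13 (σ : QBAG → ℕ → ℝ) (hσ : IsDF σ) : σ (Gw.restrict (Gw.args \ ({1,3} : Finset ℕ))) 0 = 1/4 := by
  have hWF : (Gw.restrict (Gw.args \ ({1,3} : Finset ℕ))).WF := wf_restrict Gw_wf _
  have hAc : (Gw.restrict (Gw.args \ ({1,3} : Finset ℕ))).Acyclic := acyclic_mono (fun _ _ h => edge_restrict h) Gw_acyclic
  have h4 : σ (Gw.restrict (Gw.args \ ({1,3} : Finset ℕ))) 4 = 1/2 := by
    rw [sigma_node hσ hWF hAc (by decide) (by decide : (Gw.restrict (Gw.args \ ({1,3} : Finset ℕ))).attackers 4 = ∅)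
      (by decide : (Gw.restrict (Gw.args \ ({1,3} : Finset ℕ))).supporters 4 = ∅)]
    norm_num [iotaLin, QBAG.restrict, Gw]
  have h2 : σ (Gw.restrict (Gw.args \ ({1,3} : Finset ℕ))) 2 = 1/2 := by
    rw [sigma_node hσ hWF hAc (by decide) (by decide : (Gw.restrict (Gw.args \ ({1,3} : Finset ℕ))).attackers 2 = ∅)
      (by decide : (Gw.restrict (Gw.args \ ({1,3} : Finset ℕ))).supporters 2 = ({4} : Finset ℕ)), Finset.prod_singleton, h4]
    norm_num [iotaLin, QBAG.restrict, Gw, max_def]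
  rw [sigma_node hσ hWF hAc (by decide) (by decide : (Gw.restrict (Gw.args \ ({1,3} : Finset ℕ))).attackers 0 = ({2} : Finset ℕ))
    (by decide : (Gw.restrict (Gw.args \ ({1,3} : Finset ℕ))).supporters 0 = (∅ : Finset ℕ))]
  simp only [Finset.prod_singleton, Finset.prod_empty, h2]
  norm_num [iotaLin, QBAG.restrict, Gw, max_def]

lemma sigB_13 (σ : QBAG → ℕ → ℝ) (hσ : IsDF σ) : σ (Gw.restrict (Gw.args \ insert 4 ({1,3} : Finset ℕ))) 0 = 1/2 := by
  have hWF : (Gw.restrict (Gw.args \ insert 4 ({1,3} : Finset ℕ))).WF := wf_restrict Gw_wf _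
  have hAc : (Gw.restrict (Gw.args \ insert 4 ({1,3} : Finset ℕ))).Acyclic := acyclic_mono (fun _ _ h => edge_restrict h) Gw_acyclic
  have h2 : σ (Gw.restrict (Gw.args \ insert 4 ({1,3} : Finset ℕ))) 2 = 0 := by
    rw [sigma_node hσ hWF hAc (by decide) (by decide : (Gw.restrict (Gw.args \ insert 4 ({1,3} : Finset ℕ))).attackers 2 = ∅)
      (by decide : (Gw.restrict (Gw.args \ insert 4 ({1,3} : Finset ℕ))).supporters 2 = (∅ : Finset ℕ))]
    norm_num [iotaLin, QBAG.restrict, Gw, max_def]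
  rw [sigma_node hσ hWF hAc (by decide) (by decide : (Gw.restrict (Gw.args \ insert 4 ({1,3} : Finset ℕ))).attackers 0 = ({2} : Finset ℕ))
    (by decide : (Gw.restrict (Gw.args \ insert 4 ({1,3} : Finset ℕ))).supporters 0 = (∅ : Finset ℕ))]
  simp only [Finset.prod_singleton, Finset.prod_empty, h2]
  norm_num [iotaLin, QBAG.restrict, Gw, max_def]

lemma sigA_23 (σ : QBAG → ℕ → ℝ) (hσ : IsDF σ) : σ (Gw.restrict (Gw.args \ ({2,3} : Finset ℕ))) 0 = 3/4 := by
  have hWF : (Gw.restrict (Gw.args \ ({2,3} : Finset ℕ))).WF := wf_restrict Gw_wf _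
  have hAc : (Gw.restrict (Gw.args \ ({2,3} : Finset ℕ))).Acyclic := acyclic_mono (fun _ _ h => edge_restrict h) Gw_acyclic
  have h4 : σ (Gw.restrict (Gw.args \ ({2,3} : Finset ℕ))) 4 = 1/2 := by
    rw [sigma_node hσ hWF hAc (by decide) (by decide : (Gw.restrict (Gw.args \ ({2,3} : Finset ℕ))).attackers 4 = ∅)
      (by decide : (Gw.restrict (Gw.args \ ({2,3} : Finset ℕ))).supporters 4 = ∅)]
    norm_num [iotaLin, QBAG.restrict, Gw]
  have h1 : σ (Gw.restrict (Gw.args \ ({2,3} : Finset ℕ))) 1 = 1/2 := by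
    rw [sigma_node hσ hWF hAc (by decide) (by decide : (Gw.restrict (Gw.args \ ({2,3} : Finset ℕ))).attackers 1 = ∅)
      (by decide : (Gw.restrict (Gw.args \ ({2,3} : Finset ℕ))).supporters 1 = ({4} : Finset ℕ)), Finset.prod_singleton, h4]
    norm_num [iotaLin, QBAG.restrict, Gw, max_def]
  rw [sigma_node hσ hWF hAc (by decide) (by decide : (Gw.restrict (Gw.args \ ({2,3} : Finset ℕ))).attackers 0 = (∅ : Finset ℕ))
    (by decide : (Gw.restrict (Gw.args \ ({2,3} : Finset ℕ))).supporters 0 = ({1} : Finset ℕ))]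
  simp only [Finset.prod_singleton, Finset.prod_empty, h1]
  norm_num [iotaLin, QBAG.restrict, Gw, max_def]

lemma sigB_23 (σ : QBAG → ℕ → ℝ) (hσ : IsDF σ) : σ (Gw.restrict (Gw.args \ insert 4 ({2,3} : Finset ℕ))) 0 = 1/2 := by
  have hWF : (Gw.restrict (Gw.args \ insert 4 ({2,3} : Finset ℕ))).WF := wf_restrict Gw_wf _
  have hAc : (Gw.restrict (Gw.args \ insert 4 ({2,3} : Finset ℕ))).Acyclic := acyclic_mono (fun _ _ h => edge_restrict h) Gw_acyclic
  have h1 : σ (Gw.restrict (Gw.args \ insert 4 ({2,3} : Finset ℕ))) 1 = 0 := by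
    rw [sigma_node hσ hWF hAc (by decide) (by decide : (Gw.restrict (Gw.args \ insert 4 ({2,3} : Finset ℕ))).attackers 1 = ∅)
      (by decide : (Gw.restrict (Gw.args \ insert 4 ({2,3} : Finset ℕ))).supporters 1 = (∅ : Finset ℕ))]
    norm_num [iotaLin, QBAG.restrict, Gw, max_def]
  rw [sigma_node hσ hWF hAc (by decide) (by decide : (Gw.restrict (Gw.args \ insert 4 ({2,3} : Finset ℕ))).attackers 0 = (∅ : Finset ℕ))
    (by decide : (Gw.restrict (Gw.args \ insert 4 ({2,3} : Finset ℕ))).supporters 0 = ({1} : Finset ℕ))]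
  simp only [Finset.prod_singleton, Finset.prod_empty, h1]
  norm_num [iotaLin, QBAG.restrict, Gw, max_def]

lemma sigA_123 (σ : QBAG → ℕ → ℝ) (hσ : IsDF σ) : σ (Gw.restrict (Gw.args \ ({1,2,3} : Finset ℕ))) 0 = 1/2 := by
  have hWF : (Gw.restrict (Gw.args \ ({1,2,3} : Finset ℕ))).WF := wf_restrict Gw_wf _
  have hAc : (Gw.restrict (Gw.args \ ({1,2,3} : Finset ℕ))).Acyclic := acyclic_mono (fun _ _ h => edge_restrict h) Gw_acyclic
  have h4 : σ (Gw.restrict (Gw.args \ ({1,2,3} : Finset ℕ))) 4 = 1/2 := by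
    rw [sigma_node hσ hWF hAc (by decide) (by decide : (Gw.restrict (Gw.args \ ({1,2,3} : Finset ℕ))).attackers 4 = ∅)
      (by decide : (Gw.restrict (Gw.args \ ({1,2,3} : Finset ℕ))).supporters 4 = ∅)]
    norm_num [iotaLin, QBAG.restrict, Gw]
  rw [sigma_node hσ hWF hAc (by decide) (by decide : (Gw.restrict (Gw.args \ ({1,2,3} : Finset ℕ))).attackers 0 = (∅ : Finset ℕ))
    (by decide : (Gw.restrict (Gw.args \ ({1,2,3} : Finset ℕ))).supporters 0 = (∅ : Finset ℕ))]
  simp only [Finset.prod_singleton, Finset.prod_empty]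
  norm_num [iotaLin, QBAG.restrict, Gw, max_def]

lemma sigB_123 (σ : QBAG → ℕ → ℝ) (hσ : IsDF σ) : σ (Gw.restrict (Gw.args \ insert 4 ({1,2,3} : Finset ℕ))) 0 = 1/2 := by
  have hWF : (Gw.restrict (Gw.args \ insert 4 ({1,2,3} : Finset ℕ))).WF := wf_restrict Gw_wf _
  have hAc : (Gw.restrict (Gw.args \ insert 4 ({1,2,3} : Finset ℕ))).Acyclic := acyclic_mono (fun _ _ h => edge_restrict h) Gw_acyclic
  rw [sigma_node hσ hWF hAc (by decide) (by decide : (Gw.restrict (Gw.args \ insert 4 ({1,2,3} : Finset ℕ))).attackers 0 = (∅ : Finset ℕ))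
    (by decide : (Gw.restrict (Gw.args \ insert 4 ({1,2,3} : Finset ℕ))).supporters 0 = (∅ : Finset ℕ))]
  simp only [Finset.prod_singleton, Finset.prod_empty]
  norm_num [iotaLin, QBAG.restrict, Gw, max_def]

lemma sig_full (σ : QBAG → ℕ → ℝ) (hσ : IsDF σ) : σ Gw 0 = 3/8 := by
  have hWF := Gw_wf
  have hAc := Gw_acyclic
  have h4 : σ Gw 4 = 1/2 := by
    rw [sigma_node hσ hWF hAc (by decide) (by decide : Gw.attackers 4 = ∅)
      (by decide : Gw.supporters 4 = ∅)]
    norm_num [iotaLin, Gw]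
  have h1 : σ Gw 1 = 1/2 := by
    rw [sigma_node hσ hWF hAc (by decide) (by decide : Gw.attackers 1 = ∅)
      (by decide : Gw.supporters 1 = {4}), Finset.prod_singleton, h4]
    norm_num [iotaLin, Gw, max_def]
  have h2 : σ Gw 2 = 1/2 := by
    rw [sigma_node hσ hWF hAc (by decide) (by decide : Gw.attackers 2 = ∅)
      (by decide : Gw.supporters 2 = {4}), Finset.prod_singleton, h4]
    norm_num [iotaLin, Gw, max_def]
  have h3 : σ Gw 3 = 1/2 := by
    rw [sigma_node hσ hWF hAc (by decide) (by decide : Gw.attackers 3 = ∅)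
      (by decide : Gw.supporters 3 = {4}), Finset.prod_singleton, h4]
    norm_num [iotaLin, Gw, max_def]
  rw [sigma_node hσ hWF hAc (by decide) (by decide : Gw.attackers 0 = {2,3})
    (by decide : Gw.supporters 0 = {1}), Finset.prod_singleton, h1,
    Finset.prod_pair (by norm_num : (2:ℕ) ≠ 3), h2, h3]
  norm_num [iotaLin, Gw, max_def]

lemma sig_restrict_full (σ : QBAG → ℕ → ℝ) (hσ : IsDF σ) :
    σ (Gw.restrict (Gw.args \ (∅ : Finset ℕ))) 0 = 3/8 := sigA_0 σ hσ

lemma ctrb_val (σ : QBAG → ℕ → ℝ) (hσ : IsDF σ) : ctrbS σ Gw 0 4 = -(1/12) := by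
  rw [ctrbS]
  rw [show (Gw.args.erase 0) = ({1,2,3,4} : Finset ℕ) from by decide]
  rw [show (({1,2,3,4} : Finset ℕ).erase 4) = ({1,2,3} : Finset ℕ) from by decide]
  rw [show ({1,2,3} : Finset ℕ).powerset =
    ({∅, {1}, {2}, {3}, {1,2}, {1,3}, {2,3}, {1,2,3}} : Finset (Finset ℕ)) from by decide]
  rw [Finset.sum_insert (by decide), Finset.sum_insert (by decide),
    Finset.sum_insert (by decide), Finset.sum_insert (by decide),
    Finset.sum_insert (by decide), Finset.sum_insert (by decide),
    Finset.sum_insert (by decide), Finset.sum_singleton]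
  rw [sigA_0 σ hσ, sigB_0 σ hσ, sigA_1 σ hσ, sigB_1 σ hσ, sigA_2 σ hσ, sigB_2 σ hσ,
    sigA_3 σ hσ, sigB_3 σ hσ, sigA_12 σ hσ, sigB_12 σ hσ, sigA_13 σ hσ, sigB_13 σ hσ,
    sigA_23 σ hσ, sigB_23 σ hσ, sigA_123 σ hσ, sigB_123 σ hσ]
  rw [show ((∅ : Finset ℕ)).card = 0 from by decide,
    show (({1} : Finset ℕ)).card = 1 from by decide,
    show (({2} : Finset ℕ)).card = 1 from by decide,
    show (({3} : Finset ℕ)).card = 1 from by decide,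
    show (({1,2} : Finset ℕ)).card = 2 from by decide,
    show (({1,3} : Finset ℕ)).card = 2 from by decide,
    show (({2,3} : Finset ℕ)).card = 2 from by decide,
    show (({1,2,3} : Finset ℕ)).card = 3 from by decide,
    show (({1,2,3,4} : Finset ℕ)).card = 4 from by decide]
  norm_num [Nat.factorial]

lemma sig_setTau (σ : QBAG → ℕ → ℝ) (hσ : IsDF σ) {ε : ℝ} (hε : ε ∈ Set.Icc (0:ℝ) 1) :
    σ (Gw.setTau 4 ε) 0 = 1/2 - (ε - ε^2)/2 := by
  set H := Gw.setTau 4 ε with hH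
  have hWF : H.WF := wf_setTau Gw_wf hε
  have hAc : H.Acyclic := acyclic_mono (fun _ _ h => h) Gw_acyclic
  have hargs : H.args = Gw.args := rfl
  have hatt : ∀ b, H.attackers b = Gw.attackers b := fun _ => rfl
  have hsup : ∀ b, H.supporters b = Gw.supporters b := fun _ => rfl
  have htau4 : H.tau 4 = ε := by simp [hH, QBAG.setTau]
  have htaum : ∀ m, m ≠ 4 → H.tau m = Gw.tau m := by
    intro m hm; simp [hH, QBAG.setTau, Function.update_of_ne hm]
  have h4 : σ H 4 = ε := by
    rw [sigma_node hσ hWF hAc (hargs ▸ (by decide : (4:ℕ) ∈ Gw.args)) ((hatt 4).trans (by decide : Gw.attackers 4 = ∅))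
      ((hsup 4).trans (by decide : Gw.supporters 4 = ∅)), htau4]
    norm_num [iotaLin]
  have hmid : ∀ m ∈ ({1,2,3} : Finset ℕ), σ H m = ε := by
    intro m hm
    fin_cases hm
    · rw [sigma_node hσ hWF hAc (hargs ▸ (by decide : (1:ℕ) ∈ Gw.args)) ((hatt 1).trans (by decide : Gw.attackers 1 = ∅))
        ((hsup 1).trans (by decide : Gw.supporters 1 = {4})), Finset.prod_singleton, h4,
        htaum 1 (by norm_num)]
      norm_num [iotaLin, Gw, max_eq_right hε.1]
    · rw [sigma_node hσ hWF hAc (hargs ▸ (by decide : (2:ℕ) ∈ Gw.args)) ((hatt 2).trans (by decide : Gw.attackers 2 = ∅))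
        ((hsup 2).trans (by decide : Gw.supporters 2 = {4})), Finset.prod_singleton, h4,
        htaum 2 (by norm_num)]
      norm_num [iotaLin, Gw, max_eq_right hε.1]
    · rw [sigma_node hσ hWF hAc (hargs ▸ (by decide : (3:ℕ) ∈ Gw.args)) ((hatt 3).trans (by decide : Gw.attackers 3 = ∅))
        ((hsup 3).trans (by decide : Gw.supporters 3 = {4})), Finset.prod_singleton, h4,
        htaum 3 (by norm_num)]
      norm_num [iotaLin, Gw, max_eq_right hε.1]
  rw [sigma_node hσ hWF hAc (hargs ▸ (by decide : (0:ℕ) ∈ Gw.args)) ((hatt 0).trans (by decide : Gw.attackers 0 = {2,3}))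
    ((hsup 0).trans (by decide : Gw.supporters 0 = {1})), Finset.prod_singleton,
    hmid 1 (by decide), Finset.prod_pair (by norm_num : (2:ℕ) ≠ 3),
    hmid 2 (by decide), hmid 3 (by decide), htaum 0 (by norm_num)]
  have htau0 : Gw.tau 0 = 1/2 := by norm_num [Gw]
  rw [htau0, iotaLin]
  have hs : (1 - ε) * (1 - ε) - (1 - ε) = -(ε - ε^2) := by ring
  rw [hs]
  have h1 : max 0 (-(-(ε - ε^2))) = ε - ε^2 := by
    rw [neg_neg, max_eq_right]; nlinarith [hε.1, hε.2]
  have h2 : max 0 (-(ε - ε^2)) = 0 := by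
    rw [max_eq_left]; nlinarith [hε.1, hε.2]
  rw [h1, h2]; ring

/-- The Shapley-based contribution function violates local faithfulness
w.r.t. the DFQuAD semantics: there exist an acyclic QBAG G and a, x ∈ A with
ctrb^s_{G,a}(x) < 0 such that for every δ > 0 there is
ε ∈ [τ(x) − δ, τ(x) + δ] ∩ [0,1] with ε > τ(x) for which σ_{G[x←ε]}(a) > σ_G(a),
violating the defining condition of local faithfulness. -/
theorem ctrbS_violates_local_faithfulness_DF
    (σ : QBAG → ℕ → ℝ) (hσ : IsDF σ) :
    ¬ LocalFaithfulness (ctrbS σ) σ ∧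
    ∃ G : QBAG, G.WF ∧ G.Acyclic ∧ ∃ a ∈ G.args, ∃ x ∈ G.args,
      ctrbS σ G a x < 0 ∧
      ∀ δ > 0, ∃ ε ∈ Set.Icc (G.tau x - δ) (G.tau x + δ) ∩ Set.Icc (0 : ℝ) 1,
        G.tau x < ε ∧ σ G a < σ (G.setTau x ε) a := by
  have htau4 : Gw.tau 4 = 1/2 := by norm_num [Gw]
  have hctrb : ctrbS σ Gw 0 4 < 0 := by rw [ctrb_val σ hσ]; norm_num
  have hmono : ∀ ε : ℝ, ε ∈ Set.Icc (0:ℝ) 1 → 1/2 < ε → σ Gw 0 < σ (Gw.setTau 4 ε) 0 := by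
    intro ε hε hlt
    rw [sig_full σ hσ, sig_setTau σ hσ hε]
    nlinarith [mul_pos (sub_pos.2 hlt) (sub_pos.2 hlt)]
  have hdelta : ∀ δ : ℝ, δ > 0 →
      ∃ ε ∈ Set.Icc (Gw.tau 4 - δ) (Gw.tau 4 + δ) ∩ Set.Icc (0 : ℝ) 1,
        Gw.tau 4 < ε ∧ σ Gw 0 < σ (Gw.setTau 4 ε) 0 := by
    intro δ hδ
    refine ⟨min (1/2 + δ/2) (3/4), ?_, ?_, ?_⟩
    · rw [htau4]
      constructor
      · constructor
        · have : (1:ℝ)/2 - δ < min (1/2 + δ/2) (3/4) := by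
            apply lt_min <;> linarith
          linarith [this]
        · calc min (1/2 + δ/2) (3/4) ≤ 1/2 + δ/2 := min_le_left _ _
            _ ≤ 1/2 + δ := by linarith
      · constructor
        · have := lt_min (by linarith : (0:ℝ) < 1/2 + δ/2) (by norm_num : (0:ℝ) < 3/4)
          linarith [this]
        · calc min (1/2 + δ/2) (3/4) ≤ 3/4 := min_le_right _ _
            _ ≤ 1 := by norm_num
    · rw [htau4]; apply lt_min <;> linarith
    · apply hmono
      · constructor
        · have := lt_min (by linarith : (0:ℝ) < 1/2 + δ/2) (by norm_num : (0:ℝ) < 3/4)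
          linarith [this]
        · calc min (1/2 + δ/2) (3/4) ≤ 3/4 := min_le_right _ _
            _ ≤ 1 := by norm_num
      · apply lt_min <;> linarith
  constructor
  · intro hLF
    obtain ⟨δ, hδ, hprop⟩ := hLF Gw Gw_wf Gw_acyclic 0 (by decide) 4 (by decide)
    obtain ⟨ε, hεmem, hεgt, hεsig⟩ := hdelta δ hδ
    have := ((hprop ε hεmem).1 hctrb).2 hεgt
    linarith
  · exact ⟨Gw, Gw_wf, Gw_acyclic, 0, by decide, 4, by decide, hctrb, hdelta⟩
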